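/- Let Ω and Δ be locally compact Hausdorff spaces, X, Y Banach spaces, σ : Δ → Ω an injective map, and θ : C₀(Ω, X) → C₀(Δ, Y) a ℂ-linear map (not assumed bounded) satisfying θ(f·φ)(ν) = θ(f)(ν)·φ(σ(ν)) for all f ∈ C₀(Ω,X), φ ∈ C₀(Ω), ν ∈ Δ. Then there exist a finite subset T ⊆ Δ and a constant κ > 0 such that ‖θ(f)(ν)‖ ≤ κ‖f‖ for all f ∈ C₀(Ω,X) and all ν ∈ Δ \ T. -/

import Mathlib

open ZeroAtInfty Filter Topology

/-- Pointwise multiplication of a `C₀` scalar function and a `C₀` vector-valued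
function. -/
noncomputable def c0smul {Ω X : Type*} [TopologicalSpace Ω]
    [NormedAddCommGroup X] [NormedSpace ℂ X]
    (φ : C₀(Ω, ℂ)) (f : C₀(Ω, X)) : C₀(Ω, X) where
  toFun := fun ω => φ ω • f ω
  continuous_toFun := (φ.continuous).smul (f.continuous)
  zero_at_infty' := by
    have := (φ.zero_at_infty').smul (f.zero_at_infty')
    simpa using this

@[simp] lemma c0smul_apply {Ω X : Type*} [TopologicalSpace Ω]
    [NormedAddCommGroup X] [NormedSpace ℂ X]
    (φ : C₀(Ω, ℂ)) (f : C₀(Ω, X)) (ω : Ω) : c0smul φ f ω = φ ω • f ω := rfl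

lemma c0norm_apply_le' {α β : Type*} [TopologicalSpace α] [NormedAddCommGroup β]
    (f : C₀(α,β)) (ω : α) : ‖f ω‖ ≤ ‖f‖ := by
  rw [← ZeroAtInftyContinuousMap.norm_toBCF_eq_norm]
  exact f.toBCF.norm_coe_le_norm ω

lemma c0norm_le' {α β : Type*} [TopologicalSpace α] [NormedAddCommGroup β]
    (f : C₀(α,β)) {C : ℝ} (hC : 0 ≤ C) (h : ∀ ω, ‖f ω‖ ≤ C) : ‖f‖ ≤ C := by
  rw [← ZeroAtInftyContinuousMap.norm_toBCF_eq_norm]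
  exact (BoundedContinuousFunction.norm_le hC).mpr h

noncomputable def mulCLM {Ω X : Type*} [TopologicalSpace Ω]
    [NormedAddCommGroup X] [NormedSpace ℂ X] (ψ : C₀(Ω, ℂ)) :
    C₀(Ω, X) →L[ℂ] C₀(Ω, X) :=
  LinearMap.mkContinuous
    { toFun := fun f => c0smul ψ f
      map_add' := by
        intro f g
        ext ω
        simp only [c0smul_apply, ZeroAtInftyContinuousMap.add_apply]
        exact smul_add _ _ _
      map_smul' := by
        intro c f
        ext ω
        simp only [c0smul_apply, ZeroAtInftyContinuousMap.smul_apply, RingHom.id_apply]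
        exact smul_comm _ _ _ }
    ‖ψ‖ (by
      intro f
      refine c0norm_le' _ (by positivity) fun ω => ?_
      simp only [LinearMap.coe_mk, AddHom.coe_mk, c0smul_apply, norm_smul]
      exact mul_le_mul (c0norm_apply_le' ψ ω) (c0norm_apply_le' f ω)
        (norm_nonneg _) (norm_nonneg _))

@[simp] lemma mulCLM_apply {Ω X : Type*} [TopologicalSpace Ω]
    [NormedAddCommGroup X] [NormedSpace ℂ X] (ψ : C₀(Ω, ℂ)) (f : C₀(Ω, X)) :
    mulCLM ψ f = c0smul ψ f := rfl

lemma sep_step {Ω : Type*} [TopologicalSpace Ω] [LocallyCompactSpace Ω] [T2Space Ω]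
    (x : ℕ → Ω) (hx : Function.Injective x) (N : ℕ) (B : Set ℕ) (hB : B.Infinite)
    (W : Set Ω) (hW : IsOpen W) (hBW : ∀ n ∈ B, x n ∈ W) :
    ∃ n ∈ B, N ≤ n ∧ ∃ C : Set Ω, IsClosed C ∧ C ⊆ W ∧ x n ∈ interior C ∧
      {k ∈ B | x k ∉ C}.Infinite := by
  have hB' : (B \ Set.Iio N).Infinite := hB.diff (Set.finite_Iio N)
  obtain ⟨a, ha, b, hb, hab⟩ := hB'.nontrivial
  have hxab : x a ≠ x b := hx.ne hab
  obtain ⟨U, V, hU, hV, haU, hbV, hUV⟩ := t2_separation hxab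
  have h1 : U ∩ W ∈ 𝓝 (x a) := Filter.inter_mem (hU.mem_nhds haU) (hW.mem_nhds (hBW a ha.1))
  have h2 : V ∩ W ∈ 𝓝 (x b) := Filter.inter_mem (hV.mem_nhds hbV) (hW.mem_nhds (hBW b hb.1))
  obtain ⟨Ca, hCam, hCac, hCas⟩ := exists_mem_nhds_isClosed_subset h1
  obtain ⟨Cb, hCbm, hCbc, hCbs⟩ := exists_mem_nhds_isClosed_subset h2
  have hcase : {k ∈ B | x k ∉ Ca}.Infinite ∨ {k ∈ B | x k ∉ Cb}.Infinite := by
    by_contra hcon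
    push_neg at hcon
    apply hB
    have hsub : B ⊆ {k ∈ B | x k ∉ Ca} ∪ {k ∈ B | x k ∉ Cb} := by
      intro k hk
      by_cases hka : x k ∈ Ca
      · exact Or.inr ⟨hk, fun hkb => hUV.le_bot ⟨(hCas hka).1, (hCbs hkb).1⟩⟩
      · exact Or.inl ⟨hk, hka⟩
    exact Set.Finite.subset (hcon.1.union hcon.2) hsub
  rcases hcase with h | h
  · exact ⟨a, ha.1, not_lt.mp ha.2, Ca, hCac, hCas.trans Set.inter_subset_right,
      mem_interior_iff_mem_nhds.mpr hCam, h⟩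
  · exact ⟨b, hb.1, not_lt.mp hb.2, Cb, hCbc, hCbs.trans Set.inter_subset_right,
      mem_interior_iff_mem_nhds.mpr hCbm, h⟩

lemma exists_disjoint_opens {Ω : Type*} [TopologicalSpace Ω] [LocallyCompactSpace Ω] [T2Space Ω]
    (x : ℕ → Ω) (hx : Function.Injective x) :
    ∃ (m : ℕ → ℕ) (U : ℕ → Set Ω), (∀ i, i ≤ m i) ∧ (∀ i, IsOpen (U i)) ∧
      (∀ i, x (m i) ∈ U i) ∧ (∀ i j, i ≠ j → ∀ ω, ω ∈ U i → ω ∉ U j) := by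
  classical
  let St := {q : Set ℕ × Set Ω // q.1.Infinite ∧ IsOpen q.2 ∧ ∀ n ∈ q.1, x n ∈ q.2}
  have hstep : ∀ (i : ℕ) (s : St), ∃ r : ℕ × Set Ω,
      r.1 ∈ s.1.1 ∧ i ≤ r.1 ∧ IsClosed r.2 ∧ r.2 ⊆ s.1.2 ∧ x r.1 ∈ interior r.2 ∧
      {k ∈ s.1.1 | x k ∉ r.2}.Infinite := by
    intro i s
    obtain ⟨n, hn, hNn, C, h1, h2, h3, h4⟩ :=
      sep_step x hx i s.1.1 s.2.1 s.1.2 s.2.2.1 s.2.2.2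
    exact ⟨(n, C), hn, hNn, h1, h2, h3, h4⟩
  choose G hG1 hG2 hG3 hG4 hG5 hG6 using hstep
  let next : ℕ → St → St := fun i s =>
    ⟨({k ∈ s.1.1 | x k ∉ (G i s).2}, s.1.2 \ (G i s).2),
      hG6 i s, s.2.2.1.sdiff (hG3 i s), fun n hn => ⟨s.2.2.2 n hn.1, hn.2⟩⟩
  let chain : ℕ → St := fun n =>
    Nat.rec ⟨(Set.univ, Set.univ), Set.infinite_univ, isOpen_univ, fun _ _ => trivial⟩
      (fun i s => next i s) n
  have hWsub : ∀ i, (chain (i+1)).1.2 = (chain i).1.2 \ (G i (chain i)).2 := fun i => rfl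
  have hmono : ∀ i j, i ≤ j → (chain j).1.2 ⊆ (chain i).1.2 := by
    intro i j hij
    induction j, hij using Nat.le_induction with
    | base => exact subset_rfl
    | succ j hij ih =>
      rw [hWsub j]
      exact Set.diff_subset.trans ih
  refine ⟨fun i => (G i (chain i)).1, fun i => interior (G i (chain i)).2,
    fun i => hG2 i (chain i), fun i => isOpen_interior, fun i => hG5 i (chain i), ?_⟩
  have key : ∀ i j, i < j → ∀ ω, ω ∈ interior (G j (chain j)).2 →
      ω ∉ interior (G i (chain i)).2 := by
    intro i j hij ω hωj hωi
    have h1 : ω ∈ (chain j).1.2 := (hG4 j (chain j)) (interior_subset hωj)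
    have h2 : ω ∈ (chain (i+1)).1.2 := hmono (i+1) j hij h1
    rw [hWsub i] at h2
    exact h2.2 (interior_subset hωi)
  intro i j hij ω hωi hωj
  rcases lt_or_gt_of_ne hij with h | h
  · exact key i j h ω hωj hωi
  · exact key j i h ω hωi hωj

lemma exists_bump {Ω : Type*} [TopologicalSpace Ω] [LocallyCompactSpace Ω] [T2Space Ω]
    {x : Ω} {U : Set Ω} (hU : IsOpen U) (hx : x ∈ U) :
    ∃ ψ ψ' : C₀(Ω, ℂ), ψ x = 1 ∧ (∀ ω, ‖ψ ω‖ ≤ 1) ∧ (∀ ω, ψ ω ≠ 0 → ω ∈ U) ∧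
      (∀ ω, ψ' ω ≠ 0 → ω ∈ U) ∧ (∀ ω, ψ ω ≠ 0 → ψ' ω = 1) := by
  obtain ⟨K, hK, hxK, hKU⟩ := exists_compact_subset hU hx
  obtain ⟨f1, hf1_one, hf1_zero, hf1_supp, hf1_mem⟩ :=
    exists_continuous_one_zero_of_isCompact (isCompact_singleton : IsCompact {x})
      isOpen_interior.isClosed_compl
      (disjoint_compl_right_iff.mpr (Set.singleton_subset_iff.mpr hxK))
  obtain ⟨f2, hf2_one, hf2_zero, hf2_supp, hf2_mem⟩ :=
    exists_continuous_one_zero_of_isCompact hK hU.isClosed_compl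
      (disjoint_compl_right_iff.mpr hKU)
  refine ⟨⟨⟨fun ω => (f1 ω : ℂ), Complex.continuous_ofReal.comp f1.continuous⟩,
      (hf1_supp.comp_left (g := Complex.ofReal) Complex.ofReal_zero).is_zero_at_infty⟩,
    ⟨⟨fun ω => (f2 ω : ℂ), Complex.continuous_ofReal.comp f2.continuous⟩,
      (hf2_supp.comp_left (g := Complex.ofReal) Complex.ofReal_zero).is_zero_at_infty⟩,
    ?_, ?_, ?_, ?_, ?_⟩
  · show ((f1 x : ℝ) : ℂ) = 1
    rw [hf1_one (Set.mem_singleton x)]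
    norm_num
  · intro ω
    show ‖((f1 ω : ℝ) : ℂ)‖ ≤ 1
    rw [Complex.norm_real, Real.norm_eq_abs]
    exact abs_le.mpr ⟨by linarith [(hf1_mem ω).1], (hf1_mem ω).2⟩
  · intro ω h
    by_contra hω
    have hωK : ω ∉ interior K := fun hin => hω (hKU (interior_subset hin))
    exact h (by show ((f1 ω : ℝ) : ℂ) = 0; rw [hf1_zero hωK]; norm_num)
  · intro ω h
    by_contra hω
    exact h (by show ((f2 ω : ℝ) : ℂ) = 0; rw [hf2_zero hω]; norm_num)
  · intro ω h
    have hωK : ω ∈ interior K := by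
      by_contra hin
      exact h (by show ((f1 ω : ℝ) : ℂ) = 0; rw [hf1_zero hin]; norm_num)
    show ((f2 ω : ℝ) : ℂ) = 1
    rw [hf2_one (interior_subset hωK)]
    norm_num

theorem stmt_8
    {Ω Δ : Type*} [TopologicalSpace Ω] [LocallyCompactSpace Ω] [T2Space Ω]
    [TopologicalSpace Δ] [LocallyCompactSpace Δ] [T2Space Δ]
    {X Y : Type*} [NormedAddCommGroup X] [NormedSpace ℂ X] [CompleteSpace X]
    [NormedAddCommGroup Y] [NormedSpace ℂ Y] [CompleteSpace Y]
    (σ : Δ → Ω) (hσ : Function.Injective σ)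
    (θ : C₀(Ω, X) →ₗ[ℂ] C₀(Δ, Y))
    (hmod : ∀ (f : C₀(Ω, X)) (φ : C₀(Ω, ℂ)) (ν : Δ),
      θ (c0smul φ f) ν = φ (σ ν) • θ f ν) :
    ∃ (T : Finset Δ) (κ : ℝ), 0 < κ ∧
      ∀ (f : C₀(Ω, X)) (ν : Δ), ν ∉ T → ‖θ f ν‖ ≤ κ * ‖f‖ := by
  classical
  by_contra hcon
  push_neg at hcon
  have key : ∀ (T : Finset Δ) (n : ℕ), ∃ f, ∃ ν, ν ∉ T ∧ (4:ℝ)^n * ‖f‖ < ‖θ f ν‖ :=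
    fun T n => hcon T ((4:ℝ)^n) (by positivity)
  choose F V hV hF using key
  let S : ℕ → Finset Δ := fun n => Nat.rec ∅ (fun k s => insert (V s k) s) n
  let ν : ℕ → Δ := fun n => V (S n) n
  let f0 : ℕ → C₀(Ω, X) := fun n => F (S n) n
  have hSsucc : ∀ n, S (n+1) = insert (ν n) (S n) := fun n => rfl
  have hνS : ∀ n, ν n ∉ S n := fun n => hV (S n) n
  have hgrow : ∀ n, (4:ℝ)^n * ‖f0 n‖ < ‖θ (f0 n) (ν n)‖ := fun n => hF (S n) n
  have hSmono : ∀ a b, a ≤ b → S a ⊆ S b := by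
    intro a b hab
    induction b, hab using Nat.le_induction with
    | base => exact subset_rfl
    | succ b hab ih =>
      rw [hSsucc b]
      exact ih.trans (Finset.subset_insert _ _)
  have hνinj : Function.Injective ν := by
    intro a b hab
    rcases lt_trichotomy a b with h | h | h
    · exfalso
      have h1 : ν a ∈ S b := hSmono (a+1) b h (by rw [hSsucc a]; exact Finset.mem_insert_self _ _)
      rw [hab] at h1
      exact hνS b h1
    · exact h
    · exfalso
      have h1 : ν b ∈ S a := hSmono (b+1) a h (by rw [hSsucc b]; exact Finset.mem_insert_self _ _)
      rw [← hab] at h1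
      exact hνS a h1
  let x : ℕ → Ω := fun n => σ (ν n)
  have hxinj : Function.Injective x := fun a b hab => hνinj (hσ hab)
  obtain ⟨p, U, hp, hUopen, hUmem, hUdisj⟩ := exists_disjoint_opens x hxinj
  choose ψ ψ' hψone hψnorm hψsupp hψ'supp hψ'one using
    fun i => exists_bump (hUopen i) (hUmem i)
  have hfpos : ∀ n, 0 < ‖f0 n‖ := by
    intro n
    by_contra hle
    push_neg at hle
    have h0 : f0 n = 0 := norm_le_zero_iff.mp hle
    have h1 := hgrow n
    rw [h0] at h1
    simp at h1
  let c : ℕ → ℝ := fun i => (1/2:ℝ)^i / ‖f0 (p i)‖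
  have hc : ∀ i, 0 < c i := fun i => div_pos (by positivity) (hfpos (p i))
  let g : ℕ → C₀(Ω, X) := fun i => ((c i : ℂ)) • c0smul (ψ i) (f0 (p i))
  have hg_eval : ∀ i ω, g i ω = (c i : ℂ) • (ψ i ω • f0 (p i) ω) := by
    intro i ω
    show ((c i : ℂ) • c0smul (ψ i) (f0 (p i))) ω = _
    rw [ZeroAtInftyContinuousMap.smul_apply, c0smul_apply]
  have hgnorm : ∀ i, ‖g i‖ ≤ (1/2:ℝ)^i := by
    intro i
    refine c0norm_le' _ (by positivity) fun ω => ?_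
    rw [hg_eval i ω, norm_smul, norm_smul]
    have h1 : ‖(c i : ℂ)‖ = c i := by
      rw [Complex.norm_real, Real.norm_eq_abs, abs_of_pos (hc i)]
    rw [h1]
    have h2 : ‖ψ i ω‖ * ‖f0 (p i) ω‖ ≤ 1 * ‖f0 (p i)‖ :=
      mul_le_mul (hψnorm i ω) (c0norm_apply_le' _ ω) (norm_nonneg _) (by norm_num)
    calc c i * (‖ψ i ω‖ * ‖f0 (p i) ω‖) ≤ c i * (1 * ‖f0 (p i)‖) :=
          mul_le_mul_of_nonneg_left h2 (hc i).le
      _ = (1/2:ℝ)^i := by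
          show (1/2:ℝ)^i / ‖f0 (p i)‖ * (1 * ‖f0 (p i)‖) = (1/2:ℝ)^i
          rw [one_mul, div_mul_cancel₀ _ (hfpos (p i)).ne']
  have hsum : Summable g :=
    Summable.of_norm_bounded (summable_geometric_of_lt_one (by norm_num) (by norm_num)) hgnorm
  let f : C₀(Ω, X) := ∑' i, g i
  have hgsupp : ∀ i ω, g i ω ≠ 0 → ω ∈ U i := by
    intro i ω h
    refine hψsupp i ω fun h0 => h ?_
    rw [hg_eval i ω, h0, zero_smul, smul_zero]
  have hMf : ∀ i, c0smul (ψ' i) f = g i := by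
    intro i
    have h1 : c0smul (ψ' i) f = mulCLM (ψ' i) (∑' j, g j) := rfl
    have hzero : ∀ j, j ≠ i → mulCLM (ψ' i) (g j) = 0 := by
      intro j hj
      ext ω
      simp only [mulCLM_apply, c0smul_apply, ZeroAtInftyContinuousMap.coe_zero, Pi.zero_apply]
      by_cases h0 : ψ' i ω = 0
      · rw [h0, zero_smul]
      · have hgj : g j ω = 0 := by
          by_contra hgj
          exact hUdisj i j (fun hij => hj hij.symm) ω (hψ'supp i ω h0) (hgsupp j ω hgj)
        rw [hgj, smul_zero]
    rw [h1, ContinuousLinearMap.map_tsum _ hsum, tsum_eq_single i hzero]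
    ext ω
    simp only [mulCLM_apply, c0smul_apply]
    by_cases h0 : ψ i ω = 0
    · have hg0 : g i ω = 0 := by rw [hg_eval i ω, h0, zero_smul, smul_zero]
      rw [hg0, smul_zero]
    · rw [hψ'one i ω h0, one_smul]
  have hseq : ∀ n, σ (ν n) = x n := fun _ => rfl
  have hval : ∀ i, θ f (ν (p i)) = (c i : ℂ) • θ (f0 (p i)) (ν (p i)) := by
    intro i
    have h1 := hmod f (ψ' i) (ν (p i))
    rw [hseq, hψ'one i (x (p i)) (by rw [hψone i]; exact one_ne_zero), one_smul, hMf i] at h1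
    have h3 : θ (g i) = (c i : ℂ) • θ (c0smul (ψ i) (f0 (p i))) := by
      show θ ((c i : ℂ) • c0smul (ψ i) (f0 (p i))) = _
      rw [map_smul]
    rw [← h1, h3, ZeroAtInftyContinuousMap.smul_apply, hmod, hseq, hψone i, one_smul]
  have hbound : ∀ i, (2:ℝ)^i < ‖θ f‖ := by
    intro i
    have h1 : ‖θ f (ν (p i))‖ ≤ ‖θ f‖ := c0norm_apply_le' _ _
    have h2 : ‖θ f (ν (p i))‖ = c i * ‖θ (f0 (p i)) (ν (p i))‖ := by
      rw [hval i, norm_smul, Complex.norm_real, Real.norm_eq_abs, abs_of_pos (hc i)]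
    have h3 : c i * ((4:ℝ)^(p i) * ‖f0 (p i)‖) < c i * ‖θ (f0 (p i)) (ν (p i))‖ :=
      mul_lt_mul_of_pos_left (hgrow (p i)) (hc i)
    have h4 : c i * ((4:ℝ)^(p i) * ‖f0 (p i)‖) = (1/2:ℝ)^i * (4:ℝ)^(p i) := by
      show (1/2:ℝ)^i / ‖f0 (p i)‖ * ((4:ℝ)^(p i) * ‖f0 (p i)‖) = _
      rw [mul_comm ((4:ℝ)^(p i)) _, ← mul_assoc, div_mul_cancel₀ _ (hfpos (p i)).ne']
    have h5 : (2:ℝ)^i ≤ (1/2:ℝ)^i * (4:ℝ)^(p i) := by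
      have h6 : (4:ℝ)^i ≤ (4:ℝ)^(p i) := pow_le_pow_right₀ (by norm_num) (hp i)
      calc (2:ℝ)^i = (1/2:ℝ)^i * (4:ℝ)^i := by rw [← mul_pow]; norm_num
        _ ≤ (1/2:ℝ)^i * (4:ℝ)^(p i) := mul_le_mul_of_nonneg_left h6 (by positivity)
    linarith
  obtain ⟨i, hi⟩ := pow_unbounded_of_one_lt ‖θ f‖ (by norm_num : (1:ℝ) < 2)
  exact lt_asymm hi (hbound i)
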